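/- Let π, ε, C, α be as in the existence theorem for chain diagonal approximations: C a chain complex of finitely generated free left ℤ[π]-modules with chosen bases in degrees 0 to n whose augmented complex is exact. If {Δ_i} and {Δ'_i} are two families of ℤ[π]-module maps Δ_i, Δ'_i: C_* → (C ⊗_ℤ C)_{*+i} each satisfying conditions (0)–(iv) of that theorem, then Δ₀ and Δ'₀ are chain homotopic as ℤ[π]-module chain maps: there exists a ℤ[π]-module map H: C_* → (C ⊗_ℤ C)_{*+1} with Δ₀ − Δ'₀ = ∂_⊗ H + H ∂. -/

import Mathlib

open scoped TensorProduct

namespace stmt1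

variable {π : Type*} [Group π]

/-- The action of `g ∈ π` on a left `ℤ[π]`-module, as a `ℤ`-linear map. -/
noncomputable def actL (M : Type*) [AddCommGroup M] [Module (MonoidAlgebra ℤ π) M]
    (g : π) : M →ₗ[ℤ] M :=
  (DistribMulAction.toAddMonoidHom M
    ((MonoidAlgebra.of ℤ π g) : MonoidAlgebra ℤ π)).toIntLinearMap

/-- Restriction of scalars of a `ℤ[π]`-linear map to a `ℤ`-linear map. -/
noncomputable def zres {M N : Type*} [AddCommGroup M] [AddCommGroup N]
    [Module (MonoidAlgebra ℤ π) M] [Module (MonoidAlgebra ℤ π) N]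
    (f : M →ₗ[MonoidAlgebra ℤ π] N) : M →ₗ[ℤ] N :=
  f.toAddMonoidHom.toIntLinearMap

/-- The `ε`-transposition `T_ε : M ⊗ N → N ⊗ M`, `x ⊗ y ↦ (-1)^{pq} y ⊗ εx`,
for `x` of degree `p` and `y` of degree `q`. -/
noncomputable def Tmap (ε : ℤ) (p q : ℕ) (M N : Type*) [AddCommGroup M] [AddCommGroup N] :
    (M ⊗[ℤ] N) →ₗ[ℤ] (N ⊗[ℤ] M) :=
  ((-1 : ℤ) ^ (p * q) * ε) • (TensorProduct.comm ℤ M N).toLinearMap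

/-- The augmentation `ℤ[π] → ℤ`, `Σ a_g g ↦ Σ a_g`. -/
noncomputable def aug : MonoidAlgebra ℤ π →ₐ[ℤ] ℤ := MonoidAlgebra.lift ℤ ℤ π 1

/-- The augmentation `α : C₀ → ℤ` determined by a basis of `C₀` and a
distinguished basis element: `α((Σ a_g g)·h̃⁰) = Σ a_g` and `α = 0` on the
other basis elements. -/
noncomputable def alphaMap {C0 : Type*} [AddCommGroup C0]
    [Module (MonoidAlgebra ℤ π) C0] {ι : Type*}
    (b : Module.Basis ι (MonoidAlgebra ℤ π) C0) (i₀ : ι) : C0 →ₗ[ℤ] ℤ :=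
  (aug (π := π)).toLinearMap ∘ₗ
    zres (Finsupp.lapply i₀ ∘ₗ b.repr.toLinearMap)

/-- Conditions (0)–(iv) of Davis' theorem for a family of `ℤ`-linear,
`π`-equivariant degree-`i` maps `Δ_i : C_* → (C ⊗_ℤ C)_{*+i}`, recorded via
their components `Δ i k p q : C_k → C_p ⊗ C_q` (the component being relevant
when `p + q = k + i`, all other components vanishing). -/
def IsDiagApprox (n : ℕ) (C : ℕ → Type*) [∀ k, AddCommGroup (C k)]
    [∀ k, Module (MonoidAlgebra ℤ π) (C k)]
    (d : ∀ k, C (k + 1) →ₗ[MonoidAlgebra ℤ π] C k)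
    (alpha : C 0 →ₗ[ℤ] ℤ) (ε : ℤ)
    (Δ : ∀ i k p q : ℕ, C k →ₗ[ℤ] (C p ⊗[ℤ] C q)) : Prop :=
  -- components vanish unless p + q = k + i
  (∀ i k p q : ℕ, p + q ≠ k + i → Δ i k p q = 0) ∧
  -- Δ_i = 0 for i > n
  (∀ i, n < i → ∀ k p q : ℕ, Δ i k p q = 0) ∧
  -- each Δ_i is a ℤ[π]-module homomorphism (w.r.t. the diagonal action)
  (∀ (i k p q : ℕ) (g : π) (x : C k),
    Δ i k p q (actL (C k) g x)
      = TensorProduct.map (actL (C p) g) (actL (C q) g) (Δ i k p q x)) ∧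
  -- (0) for i = 0: Δ₀ is a chain map, ∂_⊗ Δ₀ - Δ₀ ∂ = 0
  (∀ k p q : ℕ, p + q = k →
    id (α := C (k + 1) →ₗ[ℤ] C p ⊗[ℤ] C q) (TensorProduct.map LinearMap.id (zres (d q)) ∘ₗ Δ 0 (k + 1) p (q + 1)
      + ((-1 : ℤ) ^ q) •
          (TensorProduct.map (zres (d p)) LinearMap.id ∘ₗ Δ 0 (k + 1) (p + 1) q))
      - Δ 0 k p q ∘ₗ zres (d k) = 0) ∧
  -- (0) for i ≥ 1, on C_{k+1}:
  -- ∂_⊗ Δ_i - (-1)^i Δ_i ∂ = Δ_{i-1} + (-1)^i T_ε Δ_{i-1}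
  (∀ i k p q : ℕ, p + q = k + i + 1 →
    id (α := C (k + 1) →ₗ[ℤ] C p ⊗[ℤ] C q) (TensorProduct.map LinearMap.id (zres (d q)) ∘ₗ Δ (i + 1) (k + 1) p (q + 1)
      + ((-1 : ℤ) ^ q) •
          (TensorProduct.map (zres (d p)) LinearMap.id ∘ₗ Δ (i + 1) (k + 1) (p + 1) q))
      - ((-1 : ℤ) ^ (i + 1)) • (Δ (i + 1) k p q ∘ₗ zres (d k))
    = Δ i (k + 1) p q
      + ((-1 : ℤ) ^ (i + 1)) • (Tmap ε q p (C q) (C p) ∘ₗ Δ i (k + 1) q p)) ∧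
  -- (0) for i ≥ 1, on C₀ (where ∂ = 0):
  (∀ i p q : ℕ, p + q = i →
    TensorProduct.map LinearMap.id (zres (d q)) ∘ₗ Δ (i + 1) 0 p (q + 1)
      + ((-1 : ℤ) ^ q) •
          (TensorProduct.map (zres (d p)) LinearMap.id ∘ₗ Δ (i + 1) 0 (p + 1) q)
    = Δ i 0 p q
      + ((-1 : ℤ) ^ (i + 1)) • (Tmap ε q p (C q) (C p) ∘ₗ Δ i 0 q p)) ∧
  -- (i) Δ_j(C_i) ⊆ ⊕_{m ≤ i, l ≤ i} C_m ⊗ C_l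
  (∀ i k p q : ℕ, (k < p ∨ k < q) → Δ i k p q = 0) ∧
  -- (ii) (α ⊗ 1) ∘ Δ₀ = 1
  (∀ k : ℕ,
    (TensorProduct.lid ℤ (C k)).toLinearMap ∘ₗ
        TensorProduct.map alpha LinearMap.id ∘ₗ Δ 0 k 0 k = LinearMap.id) ∧
  -- (iii) (1 ⊗ α) ∘ Δ₀ = 1
  (∀ k : ℕ,
    (TensorProduct.rid ℤ (C k)).toLinearMap ∘ₗ
        TensorProduct.map LinearMap.id alpha ∘ₗ Δ 0 k k 0 = LinearMap.id) ∧
  -- (iv) Δ_i(c) - c ⊗ c = a + (-1)^i T_ε a for some a ∈ C_i ⊗ C_i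
  (∀ (i : ℕ) (x : C i), ∃ a : C i ⊗[ℤ] C i,
    Δ i i i i x - x ⊗ₜ[ℤ] x = a + ((-1 : ℤ) ^ i) • (Tmap ε i i (C i) (C i) a))

end stmt1

namespace aux
open stmt1 TensorProduct
attribute [local instance high] TensorProduct.instModule

variable {π : Type*} [Group π]
variable {C : ℕ → Type*} [∀ k, AddCommGroup (C k)] [∀ k, Module (MonoidAlgebra ℤ π) (C k)]

section eqxA

@[simp] lemma zres_apply {M N : Type*} [AddCommGroup M] [AddCommGroup N]
    [Module (MonoidAlgebra ℤ π) M] [Module (MonoidAlgebra ℤ π) N]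
    (f : M →ₗ[MonoidAlgebra ℤ π] N) (x : M) : zres f x = f x := rfl

lemma actL_apply {M : Type*} [AddCommGroup M] [Module (MonoidAlgebra ℤ π) M] (g : π) (x : M) :
    actL M g x = (MonoidAlgebra.of ℤ π g) • x := rfl

lemma actL_comp {M : Type*} [AddCommGroup M] [Module (MonoidAlgebra ℤ π) M] (g h : π) :
    actL M g ∘ₗ actL M h = actL M (g * h) := by
  ext x
  simp only [LinearMap.comp_apply, actL_apply, MonoidAlgebra.of_apply, ← mul_smul]
  rw [MonoidAlgebra.single_mul_single, one_mul]

lemma actL_one {M : Type*} [AddCommGroup M] [Module (MonoidAlgebra ℤ π) M] :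
    actL M (1 : π) = LinearMap.id := by
  ext x
  simp only [actL_apply, MonoidAlgebra.of_apply, LinearMap.id_coe, id_eq]
  rw [← MonoidAlgebra.one_def, one_smul]

/-- the diagonal `ℤ[π]`-action on `C p ⊗ C q`, as an algebra map into endomorphisms. -/
noncomputable def rho (p q : ℕ) :
    MonoidAlgebra ℤ π →ₐ[ℤ] Module.End ℤ (C p ⊗[ℤ] C q) :=
  MonoidAlgebra.lift ℤ (Module.End ℤ (C p ⊗[ℤ] C q)) π
    { toFun := fun g => TensorProduct.map (actL (C p) g) (actL (C q) g)
      map_one' := by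
        show TensorProduct.map _ _ = LinearMap.id
        rw [actL_one, actL_one, TensorProduct.map_id]
      map_mul' := fun g h => by
        show TensorProduct.map _ _ = TensorProduct.map _ _ ∘ₗ TensorProduct.map _ _
        rw [← map_comp, actL_comp, actL_comp] }

lemma rho_of (p q : ℕ) (g : π) :
    rho (C := C) p q (MonoidAlgebra.of ℤ π g)
      = TensorProduct.map (actL (C p) g) (actL (C q) g) :=
  MonoidAlgebra.lift_of _ _

variable {ι : ℕ → Type*} (bC : ∀ k, Module.Basis (ι k) (MonoidAlgebra ℤ π) (C k))

/-- `ℤ[π]`-equivariant extension of values on basis elements. -/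
noncomputable def eqx (k p q : ℕ) (w : ι k → C p ⊗[ℤ] C q) :
    C k →ₗ[ℤ] C p ⊗[ℤ] C q :=
  (Finsupp.lsum ℤ (fun j => ((rho (C := C) p q).toLinearMap.flip (w j)))) ∘ₗ
    zres ((bC k).repr.toLinearMap)

lemma eqx_basis (k p q : ℕ) (w : ι k → C p ⊗[ℤ] C q) (j : ι k) :
    eqx bC k p q w (bC k j) = w j := by
  simp [eqx, Module.Basis.repr_self]

lemma eqx_zero (k p q : ℕ) : eqx bC k p q (fun _ => 0) = 0 := by
  ext x
  simp only [eqx, LinearMap.comp_apply, zres_apply, LinearEquiv.coe_coe, map_zero,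
    Finsupp.lsum_apply, LinearMap.zero_apply]
  show (((bC k).repr x).sum fun i m => (0 : _ →ₗ[ℤ] _) m) = 0
  simp

lemma eqx_smul (k p q : ℕ) (w : ι k → C p ⊗[ℤ] C q) (r : MonoidAlgebra ℤ π) (x : C k) :
    eqx bC k p q w (r • x) = rho (C := C) p q r (eqx bC k p q w x) := by
  simp only [eqx, LinearMap.comp_apply, zres_apply, LinearEquiv.coe_coe, map_smul]
  induction ((bC k).repr x) using Finsupp.induction with
  | zero => simp
  | single_add j m f hj hm ih =>
    rw [smul_add, map_add, map_add, map_add, ih, Finsupp.smul_single, Finsupp.lsum_single,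
      Finsupp.lsum_single]
    simp [smul_eq_mul, map_mul]

lemma eqx_act (k p q : ℕ) (w : ι k → C p ⊗[ℤ] C q) (g : π) (x : C k) :
    eqx bC k p q w (actL (C k) g x)
      = TensorProduct.map (actL (C p) g) (actL (C q) g) (eqx bC k p q w x) := by
  rw [actL_apply, eqx_smul, rho_of]

lemma span_orbit (k : ℕ) :
    Submodule.span ℤ (Set.range (fun gj : π × ι k => actL (C k) gj.1 (bC k gj.2))) = ⊤ := by
  rw [Submodule.eq_top_iff']
  intro x
  have hx := (bC k).linearCombination_repr x
  rw [← hx]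
  rw [Finsupp.linearCombination_apply]
  refine Submodule.sum_mem _ (fun j hj => ?_)
  show ((bC k).repr x j) • bC k j ∈ _
  generalize (bC k).repr x j = r
  induction r using MonoidAlgebra.induction_on with
  | of g =>
    exact Submodule.subset_span ⟨(g, j), rfl⟩
  | add f g hf hg =>
    rw [add_smul]; exact Submodule.add_mem _ hf hg
  | smul r f hf =>
    rw [smul_assoc]; exact Submodule.smul_mem _ _ hf

/-- extensionality for equivariant maps agreeing on an `ℤ[π]`-basis -/
lemma ext_equivariant {k p q : ℕ} {F G : C k →ₗ[ℤ] C p ⊗[ℤ] C q}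
    (hF : ∀ (g : π) (x : C k),
      F (actL (C k) g x) = TensorProduct.map (actL (C p) g) (actL (C q) g) (F x))
    (hG : ∀ (g : π) (x : C k),
      G (actL (C k) g x) = TensorProduct.map (actL (C p) g) (actL (C q) g) (G x))
    (h : ∀ j, F (bC k j) = G (bC k j)) : F = G := by
  apply LinearMap.ext_on (span_orbit bC k)
  rintro x ⟨⟨g, j⟩, rfl⟩
  simp only [hF, hG, h]


end eqxA

noncomputable def etaA (alpha : C 0 →ₗ[ℤ] ℤ) (e : C 0) : C 0 →ₗ[ℤ] C 0 := alpha.smulRight e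

@[simp] lemma etaA_apply (alpha : C 0 →ₗ[ℤ] ℤ) (e : C 0) (x : C 0) :
    etaA alpha e x = alpha x • e := rfl

lemma projZ {ιm : Type*} (m : ℕ) (b : Module.Basis ιm (MonoidAlgebra ℤ π) (C m)) :
    Module.Projective ℤ (C m) := by
  haveI : Module.Free ℤ (C m) :=
    Module.Free.of_basis ((MonoidAlgebra.basis π ℤ).smulTower b)
  infer_instance

section tower

variable {ι : ℕ → Type*} (bC : ∀ k, Module.Basis (ι k) (MonoidAlgebra ℤ π) (C k))
variable (d : ∀ k, C (k + 1) →ₗ[MonoidAlgebra ℤ π] C k)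
variable (alpha : C 0 →ₗ[ℤ] ℤ) (e : C 0)

noncomputable def s0pack
    (he : alpha e = 1)
    (haugd : ∀ x : C 1, alpha (d 0 x) = 0)
    (hexact0 : ∀ x : C 0, alpha x = 0 → ∃ y, d 0 y = x) :
    Σ' s0 : C 0 →ₗ[ℤ] C 1, ∀ x : C 0, d 0 (s0 x) + alpha x • e = x := by
  haveI := projZ 0 (bC 0)
  set K : Submodule ℤ (C 0) := LinearMap.ker alpha with hK
  have hmem : ∀ x : C 1, zres (d 0) x ∈ K := fun x => by
    simp [hK, LinearMap.mem_ker, haugd x]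
  have hmemg : ∀ x : C 0, ((LinearMap.id : C 0 →ₗ[ℤ] C 0) - etaA alpha e) x ∈ K := fun x => by
    simp [hK, LinearMap.mem_ker, he, mul_comm]
  have hsurj : Function.Surjective ((zres (d 0)).codRestrict K hmem) := by
    rintro ⟨x, hx⟩
    obtain ⟨y, hy⟩ := hexact0 x (by simpa [hK, LinearMap.mem_ker] using hx)
    exact ⟨y, Subtype.ext (by simpa using hy)⟩
  have hlift := Module.projective_lifting_property
    ((zres (d 0)).codRestrict K hmem)
    (((LinearMap.id : C 0 →ₗ[ℤ] C 0) - etaA alpha e).codRestrict K hmemg) hsurj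
  refine ⟨hlift.choose, fun x => ?_⟩
  have := congrArg (fun f => (f x : C 0)) hlift.choose_spec
  simp only [LinearMap.comp_apply, LinearMap.codRestrict_apply, zres_apply,
    LinearMap.sub_apply, LinearMap.id_apply, etaA_apply] at this
  rw [this]; abel

noncomputable def snext
    (hdd : ∀ k (x : C (k + 2)), d k (d (k + 1) x) = 0)
    (hexact : ∀ k (x : C (k + 1)), d k x = 0 → ∃ y, d (k + 1) y = x)
    (k : ℕ) (sk : C k →ₗ[ℤ] C (k + 1))
    (hJ : ∀ y : C (k + 1), d k (sk (d k y)) = d k y) :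
    Σ' s1 : C (k + 1) →ₗ[ℤ] C (k + 2),
      ∀ y : C (k + 1), d (k + 1) (s1 y) + sk (d k y) = y := by
  haveI := projZ (k + 1) (bC (k + 1))
  set K : Submodule ℤ (C (k + 1)) := LinearMap.ker (zres (d k)) with hK
  have hmem : ∀ x : C (k + 2), zres (d (k + 1)) x ∈ K := fun x => by
    simp [hK, LinearMap.mem_ker, hdd k x]
  have hmemg : ∀ y : C (k + 1), ((LinearMap.id : C (k+1) →ₗ[ℤ] C (k+1)) - sk ∘ₗ zres (d k)) y ∈ K := fun y => by
    simp [hK, LinearMap.mem_ker, hJ y]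
  have hsurj : Function.Surjective ((zres (d (k + 1))).codRestrict K hmem) := by
    rintro ⟨x, hx⟩
    obtain ⟨y, hy⟩ := hexact k x (by simpa [hK, LinearMap.mem_ker] using hx)
    exact ⟨y, Subtype.ext (by simpa using hy)⟩
  have hlift := Module.projective_lifting_property
    ((zres (d (k + 1))).codRestrict K hmem)
    (((LinearMap.id : C (k+1) →ₗ[ℤ] C (k+1)) - sk ∘ₗ zres (d k)).codRestrict K hmemg) hsurj
  refine ⟨hlift.choose, fun y => ?_⟩
  have := congrArg (fun f => (f y : C (k + 1))) hlift.choose_spec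
  simp only [LinearMap.comp_apply, LinearMap.codRestrict_apply, zres_apply,
    LinearMap.sub_apply, LinearMap.id_apply] at this
  rw [this]; abel

variable (he : alpha e = 1)
  (haugd : ∀ x : C 1, alpha (d 0 x) = 0)
  (hdd : ∀ k (x : C (k + 2)), d k (d (k + 1) x) = 0)
  (hexact0 : ∀ x : C 0, alpha x = 0 → ∃ y, d 0 y = x)
  (hexact : ∀ k (x : C (k + 1)), d k x = 0 → ∃ y, d (k + 1) y = x)

noncomputable def tower : ∀ k : ℕ,
    Σ' (a : C k →ₗ[ℤ] C (k + 1)) (b : C (k + 1) →ₗ[ℤ] C (k + 2)),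
      ∀ y : C (k + 1), d (k + 1) (b y) + a (d k y) = y :=
  fun k => Nat.rec
    (motive := fun k => Σ' (a : C k →ₗ[ℤ] C (k + 1)) (b : C (k + 1) →ₗ[ℤ] C (k + 2)),
      ∀ y : C (k + 1), d (k + 1) (b y) + a (d k y) = y)
    (⟨(s0pack bC d alpha e he haugd hexact0).1,
      (snext bC d hdd hexact 0 (s0pack bC d alpha e he haugd hexact0).1
        (fun y => by
          have := (s0pack bC d alpha e he haugd hexact0).2 (d 0 y)
          rwa [haugd y, zero_smul, add_zero] at this)).1,
      (snext bC d hdd hexact 0 (s0pack bC d alpha e he haugd hexact0).1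
        (fun y => by
          have := (s0pack bC d alpha e he haugd hexact0).2 (d 0 y)
          rwa [haugd y, zero_smul, add_zero] at this)).2⟩)
    (fun k ih =>
      ⟨ih.2.1,
       (snext bC d hdd hexact (k + 1) ih.2.1
         (fun z => by
           have := ih.2.2 (d (k + 1) z)
           rwa [hdd k z, map_zero, add_zero] at this)).1,
       (snext bC d hdd hexact (k + 1) ih.2.1
         (fun z => by
           have := ih.2.2 (d (k + 1) z)
           rwa [hdd k z, map_zero, add_zero] at this)).2⟩)
    k

/-- the contraction -/
noncomputable def sC (k : ℕ) : C k →ₗ[ℤ] C (k + 1) :=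
  (tower bC d alpha e he haugd hdd hexact0 hexact k).1

lemma sC_succ (k : ℕ) :
    sC bC d alpha e he haugd hdd hexact0 hexact (k + 1)
      = (tower bC d alpha e he haugd hdd hexact0 hexact k).2.1 := by
  cases k <;> rfl

lemma I0 (x : C 0) :
    d 0 (sC bC d alpha e he haugd hdd hexact0 hexact 0 x) + alpha x • e = x :=
  (s0pack bC d alpha e he haugd hexact0).2 x

lemma Isucc (k : ℕ) (y : C (k + 1)) :
    d (k + 1) (sC bC d alpha e he haugd hdd hexact0 hexact (k + 1) y)
      + sC bC d alpha e he haugd hdd hexact0 hexact k (d k y) = y := by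
  rw [sC_succ]
  exact (tower bC d alpha e he haugd hdd hexact0 hexact k).2.2 y

/-- composition forms -/
lemma I0comp :
    zres (d 0) ∘ₗ sC bC d alpha e he haugd hdd hexact0 hexact 0 + etaA alpha e
      = LinearMap.id := by
  ext x
  simpa using I0 bC d alpha e he haugd hdd hexact0 hexact x

lemma Icomp (k : ℕ) :
    zres (d (k + 1)) ∘ₗ sC bC d alpha e he haugd hdd hexact0 hexact (k + 1)
      + sC bC d alpha e he haugd hdd hexact0 hexact k ∘ₗ zres (d k)
      = LinearMap.id := by
  ext y
  simpa using Isucc bC d alpha e he haugd hdd hexact0 hexact k y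


end tower

section maps
variable {A B A' B' A'' B'' : Type*} [AddCommGroup A] [AddCommGroup B] [AddCommGroup A']
  [AddCommGroup B'] [AddCommGroup A''] [AddCommGroup B'']

lemma map_map (f : A →ₗ[ℤ] A') (g : B →ₗ[ℤ] B') (f' : A'' →ₗ[ℤ] A) (g' : B'' →ₗ[ℤ] B)
    (t : A'' ⊗[ℤ] B'') :
    TensorProduct.map f g (TensorProduct.map f' g' t)
      = TensorProduct.map (f ∘ₗ f') (g ∘ₗ g') t := by
  rw [← LinearMap.comp_apply, ← TensorProduct.map_comp]

lemma map_zero_l (g : B →ₗ[ℤ] B') (t : A ⊗[ℤ] B) :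
    TensorProduct.map (0 : A →ₗ[ℤ] A') g t = 0 := by
  have : TensorProduct.map (0 : A →ₗ[ℤ] A') g = 0 := by
    apply TensorProduct.ext'
    intro x y; simp
  rw [this]; rfl

lemma map_sub_l (f f' : A →ₗ[ℤ] A') (g : B →ₗ[ℤ] B') :
    TensorProduct.map (f - f') g = TensorProduct.map f g - TensorProduct.map f' g := by
  rw [sub_eq_add_neg, ← neg_one_smul ℤ f', map_add_left, map_smul_left, neg_one_smul,
    ← sub_eq_add_neg]

lemma map_sub_r (f : A →ₗ[ℤ] A') (g g' : B →ₗ[ℤ] B') :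
    TensorProduct.map f (g - g') = TensorProduct.map f g - TensorProduct.map f g' := by
  rw [sub_eq_add_neg, ← neg_one_smul ℤ g', map_add_right, map_smul_right, neg_one_smul,
    ← sub_eq_add_neg]

lemma neg_pow_succ_smul (q : ℕ) (t : A) :
    ((-1 : ℤ) ^ (q + 1)) • t = -(((-1 : ℤ) ^ q) • t) := by
  rw [pow_succ, mul_smul]
  simp

lemma neg_pow_sq_smul (q : ℕ) (t : A) :
    ((-1 : ℤ) ^ q) • (((-1 : ℤ) ^ q) • t) = t := by
  rw [smul_smul, ← pow_add]
  rw [Even.neg_one_pow ⟨q, rfl⟩, one_smul]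

end maps

section homotopy
variable (d : ∀ k, C (k + 1) →ₗ[MonoidAlgebra ℤ π] C k)
variable (alpha : C 0 →ₗ[ℤ] ℤ) (e : C 0)
variable (sc : ∀ k, C k →ₗ[ℤ] C (k + 1))

/-- the tensor-complex differential, componentwise -/
noncomputable def dstep (f : ∀ p q, C p ⊗[ℤ] C q) (p q : ℕ) : C p ⊗[ℤ] C q :=
  TensorProduct.map LinearMap.id (zres (d q)) (f p (q + 1))
    + ((-1 : ℤ) ^ q) • TensorProduct.map (zres (d p)) LinearMap.id (f (p + 1) q)

/-- the contracting homotopy of the tensor complex, componentwise -/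
noncomputable def hstep (f : ∀ p q, C p ⊗[ℤ] C q) : ∀ p q, C p ⊗[ℤ] C q
  | 0, 0 => 0
  | 0, (q + 1) => TensorProduct.map (etaA alpha e) (sc q) (f 0 q)
  | (p + 1), q => ((-1 : ℤ) ^ q) • TensorProduct.map (sc p) LinearMap.id (f p q)

variable (hI0 : zres (d 0) ∘ₗ sc 0 + etaA alpha e = LinearMap.id)
variable (hI : ∀ p, zres (d (p + 1)) ∘ₗ sc (p + 1) + sc p ∘ₗ zres (d p) = LinearMap.id)
variable (h0 : etaA alpha e ∘ₗ zres (d 0) = 0)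

lemma homotopy_L1
    (hI : ∀ p, zres (d (p + 1)) ∘ₗ sc (p + 1) + sc p ∘ₗ zres (d p) = LinearMap.id)
    (f : ∀ p q, C p ⊗[ℤ] C q) (p q : ℕ) :
    dstep d (hstep alpha e sc f) (p + 1) q
      = f (p + 1) q - hstep alpha e sc (dstep d f) (p + 1) q := by
  have key : TensorProduct.map (zres (d (p + 1)) ∘ₗ sc (p + 1)) LinearMap.id (f (p + 1) q)
      + TensorProduct.map (sc p ∘ₗ zres (d p)) LinearMap.id (f (p + 1) q)
      = f (p + 1) q := by
    rw [← LinearMap.add_apply, ← map_add_left, hI p, TensorProduct.map_id, LinearMap.id_apply]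
  simp only [dstep, hstep, map_add, LinearMap.map_smul, smul_add, map_map,
    LinearMap.comp_id, LinearMap.id_comp]
  rw [neg_pow_sq_smul, neg_pow_sq_smul, neg_pow_succ_smul, eq_sub_iff_add_eq,
    eq_sub_of_add_eq' key]
  abel

lemma homotopy_L2
    (hI0 : zres (d 0) ∘ₗ sc 0 + etaA alpha e = LinearMap.id)
    (hI : ∀ p, zres (d (p + 1)) ∘ₗ sc (p + 1) + sc p ∘ₗ zres (d p) = LinearMap.id)
    (h0 : etaA alpha e ∘ₗ zres (d 0) = 0)
    (f : ∀ p q, C p ⊗[ℤ] C q) (q : ℕ) :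
    dstep d (hstep alpha e sc f) 0 (q + 1)
      = f 0 (q + 1) - hstep alpha e sc (dstep d f) 0 (q + 1) := by
  have key : TensorProduct.map (etaA alpha e) (zres (d (q + 1)) ∘ₗ sc (q + 1)) (f 0 (q + 1))
      + TensorProduct.map (etaA alpha e) (sc q ∘ₗ zres (d q)) (f 0 (q + 1))
      = TensorProduct.map (etaA alpha e) LinearMap.id (f 0 (q + 1)) := by
    rw [← LinearMap.add_apply, ← map_add_right, hI q]
  have key0 : TensorProduct.map (zres (d 0) ∘ₗ sc 0) LinearMap.id (f 0 (q + 1))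
      + TensorProduct.map (etaA alpha e) LinearMap.id (f 0 (q + 1))
      = f 0 (q + 1) := by
    rw [← LinearMap.add_apply, ← map_add_left, hI0, TensorProduct.map_id, LinearMap.id_apply]
  simp only [dstep, hstep, map_add, LinearMap.map_smul, smul_add, map_map,
    LinearMap.comp_id, LinearMap.id_comp]
  rw [neg_pow_sq_smul, h0, map_zero_l, smul_zero, add_zero, eq_sub_iff_add_eq,
    eq_sub_of_add_eq' key, eq_sub_of_add_eq' key0]
  abel

lemma homotopy_L3
    (hI0 : zres (d 0) ∘ₗ sc 0 + etaA alpha e = LinearMap.id)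
    (f : ∀ p q, C p ⊗[ℤ] C q) :
    dstep d (hstep alpha e sc f) 0 0
      = f 0 0 - TensorProduct.map (etaA alpha e) (etaA alpha e) (f 0 0) := by
  have hsub : zres (d 0) ∘ₗ sc 0 = LinearMap.id - etaA alpha e := eq_sub_of_add_eq hI0
  simp only [dstep, hstep, map_add, LinearMap.map_smul, smul_add, map_map,
    LinearMap.comp_id, LinearMap.id_comp, pow_zero, one_smul]
  rw [hsub, map_sub_r, map_sub_l, TensorProduct.map_id, LinearMap.sub_apply,
    LinearMap.sub_apply, LinearMap.id_apply]
  abel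


end homotopy


section main

variable {ι : ℕ → Type*} (bC : ∀ k, Module.Basis (ι k) (MonoidAlgebra ℤ π) (C k))
variable (d : ∀ k, C (k + 1) →ₗ[MonoidAlgebra ℤ π] C k)
variable (alpha : C 0 →ₗ[ℤ] ℤ) (e : C 0)
variable (sc : ∀ k, C k →ₗ[ℤ] C (k + 1))
variable (DD : ∀ k p q : ℕ, C k →ₗ[ℤ] (C p ⊗[ℤ] C q))

lemma map_etaA_etaA (t : C 0 ⊗[ℤ] C 0) :
    TensorProduct.map (etaA alpha e) (etaA alpha e) t
      = alpha ((TensorProduct.lid ℤ (C 0))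
          (TensorProduct.map alpha LinearMap.id t)) • (e ⊗ₜ[ℤ] e) := by
  induction t using TensorProduct.induction_on with
  | zero => simp
  | tmul x y =>
    simp only [TensorProduct.map_tmul, etaA_apply, LinearMap.id_coe, id_eq,
      TensorProduct.lid_tmul, map_smul, smul_eq_mul]
    simp only [TensorProduct.tmul_smul, TensorProduct.smul_tmul', smul_smul, mul_comm]
  | add u v hu hv =>
    simp only [map_add, hu, hv, add_smul]

lemma act_d (k : ℕ) (g : π) (x : C (k + 1)) :
    d k (actL (C (k + 1)) g x) = actL (C k) g (d k x) :=
  (d k).map_smul _ x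

lemma act_comp_d (k : ℕ) (g : π) :
    zres (d k) ∘ₗ actL (C (k + 1)) g = actL (C k) g ∘ₗ zres (d k) :=
  LinearMap.ext fun x => act_d d k g x

lemma act_mapR (p q : ℕ) (g : π) (t : C p ⊗[ℤ] C (q + 1)) :
    TensorProduct.map LinearMap.id (zres (d q))
        (TensorProduct.map (actL (C p) g) (actL (C (q + 1)) g) t)
      = TensorProduct.map (actL (C p) g) (actL (C q) g)
          (TensorProduct.map LinearMap.id (zres (d q)) t) := by
  rw [map_map, map_map, LinearMap.id_comp, LinearMap.comp_id, act_comp_d]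

lemma act_mapL (p q : ℕ) (g : π) (t : C (p + 1) ⊗[ℤ] C q) :
    TensorProduct.map (zres (d p)) LinearMap.id
        (TensorProduct.map (actL (C (p + 1)) g) (actL (C q) g) t)
      = TensorProduct.map (actL (C p) g) (actL (C q) g)
          (TensorProduct.map (zres (d p)) LinearMap.id t) := by
  rw [map_map, map_map, LinearMap.id_comp, LinearMap.comp_id, act_comp_d]

lemma hstep_zero (f : ∀ p q, C p ⊗[ℤ] C q) (h : ∀ p q, f p q = 0) (p q : ℕ) :
    hstep alpha e sc f p q = 0 := by
  cases p with
  | zero =>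
    cases q with
    | zero => rfl
    | succ q' =>
      show TensorProduct.map (etaA alpha e) (sc q') (f 0 q') = 0
      rw [h, map_zero]
  | succ p' =>
    show ((-1 : ℤ) ^ q) • TensorProduct.map (sc p') LinearMap.id (f p' q) = 0
    rw [h, map_zero, smul_zero]

/-- the inductive step of the construction of the chain homotopy -/
noncomputable def Hstep
    (hI0 : zres (d 0) ∘ₗ sc 0 + etaA alpha e = LinearMap.id)
    (hI : ∀ p, zres (d (p + 1)) ∘ₗ sc (p + 1) + sc p ∘ₗ zres (d p) = LinearMap.id)
    (h0 : etaA alpha e ∘ₗ zres (d 0) = 0)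
    (hDvan : ∀ k p q, p + q ≠ k → DD k p q = 0)
    (hDeq : ∀ (k p q : ℕ) (g : π) (x : C k), DD k p q (actL (C k) g x)
      = TensorProduct.map (actL (C p) g) (actL (C q) g) (DD k p q x))
    (hDchain : ∀ k p q, p + q = k → ∀ x : C (k + 1),
      TensorProduct.map LinearMap.id (zres (d q)) (DD (k + 1) p (q + 1) x)
        + ((-1 : ℤ) ^ q) •
            TensorProduct.map (zres (d p)) LinearMap.id (DD (k + 1) (p + 1) q x)
      = DD k p q (d k x))
    (k : ℕ) (Hp : ∀ p q, C k →ₗ[ℤ] C p ⊗[ℤ] C q)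
    (hVanp : ∀ p q, p + q ≠ k + 1 → Hp p q = 0)
    (hEqvp : ∀ (p q : ℕ) (g : π) (x : C k), Hp p q (actL (C k) g x)
      = TensorProduct.map (actL (C p) g) (actL (C q) g) (Hp p q x))
    (hInv : ∀ p q, p + q = k → ∀ x : C (k + 1),
      TensorProduct.map LinearMap.id (zres (d q)) (Hp p (q + 1) (d k x))
        + ((-1 : ℤ) ^ q) •
            TensorProduct.map (zres (d p)) LinearMap.id (Hp (p + 1) q (d k x))
      = DD k p q (d k x)) :
    Σ' Hk : ∀ p q, C (k + 1) →ₗ[ℤ] C p ⊗[ℤ] C q,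
      (∀ p q, p + q ≠ k + 2 → Hk p q = 0) ∧
      (∀ (p q : ℕ) (g : π) (x : C (k + 1)), Hk p q (actL (C (k + 1)) g x)
        = TensorProduct.map (actL (C p) g) (actL (C q) g) (Hk p q x)) ∧
      (∀ p q, p + q = k + 1 →
        DD (k + 1) p q
          = TensorProduct.map LinearMap.id (zres (d q)) ∘ₗ Hk p (q + 1)
            + ((-1 : ℤ) ^ q) •
                (TensorProduct.map (zres (d p)) LinearMap.id ∘ₗ Hk (p + 1) q)
            + Hp p q ∘ₗ zres (d k)) := by
  classical
  set z : ι (k + 1) → ∀ p q, C p ⊗[ℤ] C q :=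
    fun j p q => DD (k + 1) p q (bC (k + 1) j) - Hp p q (d k (bC (k + 1) j)) with hz
  have hzvan : ∀ j p q, p + q ≠ k + 1 → z j p q = 0 := by
    intro j p q h
    rw [hz]
    simp only [hDvan (k + 1) p q h, hVanp p q h, LinearMap.zero_apply, sub_zero]
  have hdz : ∀ (j : ι (k + 1)) p q, dstep d (z j) p q = 0 := by
    intro j p q
    by_cases hpq : p + q = k
    · have h1 := hDchain k p q hpq (bC (k + 1) j)
      have h2 := hInv p q hpq (bC (k + 1) j)
      simp only [dstep, hz, map_sub, smul_sub]
      rw [sub_add_sub_comm, h1, h2, sub_self]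
    · have hz1 : z j p (q + 1) = 0 := hzvan j _ _ (by omega)
      have hz2 : z j (p + 1) q = 0 := hzvan j _ _ (by omega)
      simp only [dstep, hz1, hz2, map_zero, smul_zero, add_zero]
  refine ⟨fun p q => eqx bC (k + 1) p q (fun j => hstep alpha e sc (z j) p q), ?_, ?_, ?_⟩
  · intro p q h
    have hw : ∀ j, hstep alpha e sc (z j) p q = 0 := by
      intro j
      cases p with
      | zero =>
        cases q with
        | zero => rfl
        | succ q' =>
          show TensorProduct.map (etaA alpha e) (sc q') (z j 0 q') = 0
          rw [hzvan j 0 q' (by omega), map_zero]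
      | succ p' =>
        show ((-1 : ℤ) ^ q) • TensorProduct.map (sc p') LinearMap.id (z j p' q) = 0
        rw [hzvan j p' q (by omega), map_zero, smul_zero]
    show eqx bC (k + 1) p q (fun j => hstep alpha e sc (z j) p q) = 0
    rw [show (fun j => hstep alpha e sc (z j) p q) = (fun _ => 0) from funext hw, eqx_zero]
  · intro p q g x
    exact eqx_act bC (k + 1) p q _ g x
  · intro p q hpq
    apply ext_equivariant bC
    · intro g x
      exact hDeq (k + 1) p q g x
    · intro g x
      simp only [LinearMap.add_apply, LinearMap.smul_apply, LinearMap.comp_apply, zres_apply]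
      rw [eqx_act, eqx_act, act_d, hEqvp, act_mapR, act_mapL, ← LinearMap.map_smul,
        ← map_add, ← map_add]
    · intro j
      have L : dstep d (hstep alpha e sc (z j)) p q = z j p q := by
        have hzz : hstep alpha e sc (dstep d (z j)) p q = 0 :=
          hstep_zero alpha e sc _ (hdz j) p q
        cases p with
        | zero =>
          cases q with
          | zero => omega
          | succ q' =>
            rw [homotopy_L2 d alpha e sc hI0 hI h0 (z j) q', hzz, sub_zero]
        | succ p' =>
          rw [homotopy_L1 d alpha e sc hI (z j) p' q, hzz, sub_zero]
      simp only [dstep] at L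
      simp only [LinearMap.add_apply, LinearMap.smul_apply, LinearMap.comp_apply, zres_apply,
        eqx_basis]
      rw [L, hz]
      simp only [sub_add_cancel]
  
/-- the base of the construction of the chain homotopy -/
noncomputable def H0pack
    (hI0 : zres (d 0) ∘ₗ sc 0 + etaA alpha e = LinearMap.id)
    (hD00 : ∀ x : C 0,
      TensorProduct.map (etaA alpha e) (etaA alpha e) (DD 0 0 0 x) = 0)
    (hDvan : ∀ k p q, p + q ≠ k → DD k p q = 0)
    (hDeq : ∀ (k p q : ℕ) (g : π) (x : C k), DD k p q (actL (C k) g x)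
      = TensorProduct.map (actL (C p) g) (actL (C q) g) (DD k p q x)) :
    Σ' H0 : ∀ p q, C 0 →ₗ[ℤ] C p ⊗[ℤ] C q,
      (∀ p q, p + q ≠ 1 → H0 p q = 0) ∧
      (∀ (p q : ℕ) (g : π) (x : C 0), H0 p q (actL (C 0) g x)
        = TensorProduct.map (actL (C p) g) (actL (C q) g) (H0 p q x)) ∧
      (DD 0 0 0
        = TensorProduct.map LinearMap.id (zres (d 0)) ∘ₗ H0 0 1
          + TensorProduct.map (zres (d 0)) LinearMap.id ∘ₗ H0 1 0) := by
  classical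
  set z : ι 0 → ∀ p q, C p ⊗[ℤ] C q :=
    fun j p q => DD 0 p q (bC 0 j) with hz
  have hzvan : ∀ j p q, p + q ≠ 0 → z j p q = 0 := by
    intro j p q h
    rw [hz]
    simp only [hDvan 0 p q h, LinearMap.zero_apply]
  refine ⟨fun p q => eqx bC 0 p q (fun j => hstep alpha e sc (z j) p q), ?_, ?_, ?_⟩
  · intro p q h
    have hw : ∀ j, hstep alpha e sc (z j) p q = 0 := by
      intro j
      cases p with
      | zero =>
        cases q with
        | zero => rfl
        | succ q' =>
          show TensorProduct.map (etaA alpha e) (sc q') (z j 0 q') = 0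
          rw [hzvan j 0 q' (by omega), map_zero]
      | succ p' =>
        show ((-1 : ℤ) ^ q) • TensorProduct.map (sc p') LinearMap.id (z j p' q) = 0
        rw [hzvan j p' q (by omega), map_zero, smul_zero]
    show eqx bC 0 p q (fun j => hstep alpha e sc (z j) p q) = 0
    rw [show (fun j => hstep alpha e sc (z j) p q) = (fun _ => 0) from funext hw, eqx_zero]
  · intro p q g x
    exact eqx_act bC 0 p q _ g x
  · apply ext_equivariant bC
    · intro g x
      exact hDeq 0 0 0 g x
    · intro g x
      simp only [LinearMap.add_apply, LinearMap.comp_apply, zres_apply]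
      rw [eqx_act, eqx_act, act_mapR, act_mapL, ← map_add]
    · intro j
      have L : dstep d (hstep alpha e sc (z j)) 0 0 = z j 0 0 := by
        rw [homotopy_L3 d alpha e sc hI0 (z j)]
        rw [show z j 0 0 = DD 0 0 0 (bC 0 j) from rfl, hD00, sub_zero]
      simp only [dstep, pow_zero, one_smul] at L
      simp only [LinearMap.add_apply, LinearMap.comp_apply, zres_apply, eqx_basis]
      rw [L]

/-- the full chain homotopy, constructed by recursion -/
noncomputable def chainH
    (hdd : ∀ k (x : C (k + 2)), d k (d (k + 1) x) = 0)
    (hI0 : zres (d 0) ∘ₗ sc 0 + etaA alpha e = LinearMap.id)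
    (hI : ∀ p, zres (d (p + 1)) ∘ₗ sc (p + 1) + sc p ∘ₗ zres (d p) = LinearMap.id)
    (h0 : etaA alpha e ∘ₗ zres (d 0) = 0)
    (hD00 : ∀ x : C 0,
      TensorProduct.map (etaA alpha e) (etaA alpha e) (DD 0 0 0 x) = 0)
    (hDvan : ∀ k p q, p + q ≠ k → DD k p q = 0)
    (hDeq : ∀ (k p q : ℕ) (g : π) (x : C k), DD k p q (actL (C k) g x)
      = TensorProduct.map (actL (C p) g) (actL (C q) g) (DD k p q x))
    (hDchain : ∀ k p q, p + q = k → ∀ x : C (k + 1),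
      TensorProduct.map LinearMap.id (zres (d q)) (DD (k + 1) p (q + 1) x)
        + ((-1 : ℤ) ^ q) •
            TensorProduct.map (zres (d p)) LinearMap.id (DD (k + 1) (p + 1) q x)
      = DD k p q (d k x)) :
    ∀ k : ℕ,
      Σ' (Hp : ∀ p q, C k →ₗ[ℤ] C p ⊗[ℤ] C q)
         (Hk : ∀ p q, C (k + 1) →ₗ[ℤ] C p ⊗[ℤ] C q),
        ((∀ p q, p + q ≠ k + 1 → Hp p q = 0) ∧
         (∀ (p q : ℕ) (g : π) (x : C k), Hp p q (actL (C k) g x)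
            = TensorProduct.map (actL (C p) g) (actL (C q) g) (Hp p q x))) ∧
        ((∀ p q, p + q ≠ k + 2 → Hk p q = 0) ∧
         (∀ (p q : ℕ) (g : π) (x : C (k + 1)), Hk p q (actL (C (k + 1)) g x)
            = TensorProduct.map (actL (C p) g) (actL (C q) g) (Hk p q x)) ∧
         (∀ p q, p + q = k + 1 →
           DD (k + 1) p q
             = TensorProduct.map LinearMap.id (zres (d q)) ∘ₗ Hk p (q + 1)
               + ((-1 : ℤ) ^ q) •
                   (TensorProduct.map (zres (d p)) LinearMap.id ∘ₗ Hk (p + 1) q)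
               + Hp p q ∘ₗ zres (d k))) :=
  fun k => Nat.rec
    (motive := fun k =>
      Σ' (Hp : ∀ p q, C k →ₗ[ℤ] C p ⊗[ℤ] C q)
         (Hk : ∀ p q, C (k + 1) →ₗ[ℤ] C p ⊗[ℤ] C q),
        ((∀ p q, p + q ≠ k + 1 → Hp p q = 0) ∧
         (∀ (p q : ℕ) (g : π) (x : C k), Hp p q (actL (C k) g x)
            = TensorProduct.map (actL (C p) g) (actL (C q) g) (Hp p q x))) ∧
        ((∀ p q, p + q ≠ k + 2 → Hk p q = 0) ∧
         (∀ (p q : ℕ) (g : π) (x : C (k + 1)), Hk p q (actL (C (k + 1)) g x)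
            = TensorProduct.map (actL (C p) g) (actL (C q) g) (Hk p q x)) ∧
         (∀ p q, p + q = k + 1 →
           DD (k + 1) p q
             = TensorProduct.map LinearMap.id (zres (d q)) ∘ₗ Hk p (q + 1)
               + ((-1 : ℤ) ^ q) •
                   (TensorProduct.map (zres (d p)) LinearMap.id ∘ₗ Hk (p + 1) q)
               + Hp p q ∘ₗ zres (d k))))
    (let P0 := H0pack bC d alpha e sc DD hI0 hD00 hDvan hDeq
     let S0 := Hstep bC d alpha e sc DD hI0 hI h0 hDvan hDeq hDchain 0 P0.1 P0.2.1 P0.2.2.1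
       (by
         intro p q hpq x
         obtain rfl : p = 0 := by omega
         obtain rfl : q = 0 := by omega
         have h := LinearMap.congr_fun P0.2.2.2 (d 0 x)
         simp only [LinearMap.add_apply, LinearMap.comp_apply, zres_apply] at h
         rw [pow_zero, one_smul]
         exact h.symm)
     ⟨P0.1, S0.1, ⟨P0.2.1, P0.2.2.1⟩, S0.2⟩)
    (fun k ih =>
     let S := Hstep bC d alpha e sc DD hI0 hI h0 hDvan hDeq hDchain (k + 1) ih.2.1
       ih.2.2.2.1 ih.2.2.2.2.1
       (by
         intro p q hpq x
         have h := LinearMap.congr_fun (ih.2.2.2.2.2 p q hpq) (d (k + 1) x)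
         simp only [LinearMap.add_apply, LinearMap.comp_apply, zres_apply,
           LinearMap.smul_apply] at h
         rw [hdd k x, map_zero, add_zero] at h
         exact h.symm)
     ⟨ih.2.1, S.1, ⟨ih.2.2.2.1, ih.2.2.2.2.1⟩, S.2⟩)
    k

end main


end aux


/-- uniqueness up to chain homotopy.  Let `π`, `ε`, `C`, `α`
be as in Davis' existence theorem for chain diagonal approximations: `C` a
chain complex of finitely generated free left `ℤ[π]`-modules with chosen
bases in degrees `0, …, n` whose augmented complex is exact.  If `{Δ_i}` and
`{Δ'_i}` are two families of `ℤ[π]`-module maps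
`Δ_i, Δ'_i : C_* → (C ⊗_ℤ C)_{*+i}` each satisfying conditions (0)–(iv) of
that theorem, then `Δ₀` and `Δ'₀` are chain homotopic as `ℤ[π]`-module chain
maps: there is a `ℤ[π]`-module map `H : C_* → (C ⊗_ℤ C)_{*+1}` with
`Δ₀ - Δ'₀ = ∂_⊗H + H∂`. -/
theorem stmt_1 (π : Type*) [Group π] (ε : ℤ) (hε : ε = 1 ∨ ε = -1) (n : ℕ)
    (C : ℕ → Type*) [∀ k, AddCommGroup (C k)]
    [∀ k, Module (MonoidAlgebra ℤ π) (C k)]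
    (ι : ℕ → Type*) [∀ k, Fintype (ι k)]
    (bC : ∀ k, Module.Basis (ι k) (MonoidAlgebra ℤ π) (C k))
    (hbound : ∀ k, n < k → Subsingleton (C k))
    (d : ∀ k, C (k + 1) →ₗ[MonoidAlgebra ℤ π] C k)
    (hdd : ∀ k (x : C (k + 2)), d k (d (k + 1) x) = 0)
    (i₀ : ι 0)
    (haugd : ∀ x : C 1, stmt1.alphaMap (bC 0) i₀ (d 0 x) = 0)
    (hsurj : Function.Surjective (stmt1.alphaMap (bC 0) i₀))
    (hexact0 : ∀ x : C 0, stmt1.alphaMap (bC 0) i₀ x = 0 → ∃ y, d 0 y = x)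
    (hexact : ∀ k (x : C (k + 1)), d k x = 0 → ∃ y, d (k + 1) y = x)
    (Δ Δ' : ∀ i k p q : ℕ, C k →ₗ[ℤ] (C p ⊗[ℤ] C q))
    (hΔ : stmt1.IsDiagApprox n C d (stmt1.alphaMap (bC 0) i₀) ε Δ)
    (hΔ' : stmt1.IsDiagApprox n C d (stmt1.alphaMap (bC 0) i₀) ε Δ') :
    ∃ H : ∀ k p q : ℕ, C k →ₗ[ℤ] (C p ⊗[ℤ] C q),
      -- H is a degree-1 family: components vanish unless p + q = k + 1
      (∀ k p q : ℕ, p + q ≠ k + 1 → H k p q = 0) ∧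
      -- H is a ℤ[π]-module map for the diagonal action
      (∀ (k p q : ℕ) (g : π) (x : C k),
        H k p q (stmt1.actL (C k) g x)
          = TensorProduct.map (stmt1.actL (C p) g) (stmt1.actL (C q) g)
              (H k p q x)) ∧
      -- Δ₀ - Δ'₀ = ∂_⊗ H + H ∂, on C_{k+1} …
      (∀ k p q : ℕ, p + q = k + 1 →
        Δ 0 (k + 1) p q - Δ' 0 (k + 1) p q
          = id (α := C (k + 1) →ₗ[ℤ] C p ⊗[ℤ] C q) (TensorProduct.map LinearMap.id (stmt1.zres (d q)) ∘ₗ H (k + 1) p (q + 1)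
            + ((-1 : ℤ) ^ q) •
                (TensorProduct.map (stmt1.zres (d p)) LinearMap.id ∘ₗ
                  H (k + 1) (p + 1) q))
            + H k p q ∘ₗ stmt1.zres (d k)) ∧
      -- … and on C₀ (where ∂ = 0)
      (Δ 0 0 0 0 - Δ' 0 0 0 0
        = TensorProduct.map LinearMap.id (stmt1.zres (d 0)) ∘ₗ H 0 0 1
          + TensorProduct.map (stmt1.zres (d 0)) LinearMap.id ∘ₗ H 0 1 0) := by
  classical
  obtain ⟨e, he⟩ := hsurj 1
  have hI0 := aux.I0comp bC d (stmt1.alphaMap (bC 0) i₀) e he haugd hdd hexact0 hexact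
  have hI := aux.Icomp bC d (stmt1.alphaMap (bC 0) i₀) e he haugd hdd hexact0 hexact
  set sc := aux.sC bC d (stmt1.alphaMap (bC 0) i₀) e he haugd hdd hexact0 hexact with hsc
  have h0 : aux.etaA (stmt1.alphaMap (bC 0) i₀) e ∘ₗ stmt1.zres (d 0) = 0 := by
    ext x
    simp [haugd x]
  have hDvan : ∀ k p q, p + q ≠ k →
      (fun k p q => Δ 0 k p q - Δ' 0 k p q) k p q = 0 := by
    intro k p q h
    simp only
    rw [hΔ.1 0 k p q (by omega), hΔ'.1 0 k p q (by omega), sub_zero]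
  have hDeq : ∀ (k p q : ℕ) (g : π) (x : C k),
      (fun k p q => Δ 0 k p q - Δ' 0 k p q) k p q (stmt1.actL (C k) g x)
        = TensorProduct.map (stmt1.actL (C p) g) (stmt1.actL (C q) g)
            ((fun k p q => Δ 0 k p q - Δ' 0 k p q) k p q x) := by
    intro k p q g x
    simp only [LinearMap.sub_apply, hΔ.2.2.1, hΔ'.2.2.1, map_sub]
  have hDchain : ∀ k p q, p + q = k → ∀ x : C (k + 1),
      TensorProduct.map LinearMap.id (stmt1.zres (d q))
          ((fun k p q => Δ 0 k p q - Δ' 0 k p q) (k + 1) p (q + 1) x)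
        + ((-1 : ℤ) ^ q) •
            TensorProduct.map (stmt1.zres (d p)) LinearMap.id
              ((fun k p q => Δ 0 k p q - Δ' 0 k p q) (k + 1) (p + 1) q x)
      = (fun k p q => Δ 0 k p q - Δ' 0 k p q) k p q (d k x) := by
    intro k p q h x
    have e1 := LinearMap.congr_fun (hΔ.2.2.2.1 k p q h) x
    have e2 := LinearMap.congr_fun (hΔ'.2.2.2.1 k p q h) x
    simp only [LinearMap.sub_apply, LinearMap.add_apply, LinearMap.comp_apply,
      LinearMap.smul_apply, LinearMap.zero_apply, aux.zres_apply, id_eq] at e1 e2 ⊢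
    have e1' : TensorProduct.map LinearMap.id (stmt1.zres (d q)) (Δ 0 (k + 1) p (q + 1) x)
        + ((-1 : ℤ) ^ q) • TensorProduct.map (stmt1.zres (d p)) LinearMap.id (Δ 0 (k + 1) (p + 1) q x)
        = Δ 0 k p q (d k x) := sub_eq_zero.mp e1
    have e2' : TensorProduct.map LinearMap.id (stmt1.zres (d q)) (Δ' 0 (k + 1) p (q + 1) x)
        + ((-1 : ℤ) ^ q) • TensorProduct.map (stmt1.zres (d p)) LinearMap.id (Δ' 0 (k + 1) (p + 1) q x)
        = Δ' 0 k p q (d k x) := sub_eq_zero.mp e2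
    rw [map_sub, map_sub, smul_sub, sub_add_sub_comm, e1', e2']
  have hD00 : ∀ x : C 0,
      TensorProduct.map (aux.etaA (stmt1.alphaMap (bC 0) i₀) e)
          (aux.etaA (stmt1.alphaMap (bC 0) i₀) e)
          ((fun k p q => Δ 0 k p q - Δ' 0 k p q) 0 0 0 x) = 0 := by
    intro x
    have h2 : TensorProduct.lid ℤ (C 0)
        (TensorProduct.map (stmt1.alphaMap (bC 0) i₀) LinearMap.id (Δ 0 0 0 0 x)) = x :=
      LinearMap.congr_fun (hΔ.2.2.2.2.2.2.2.1 0) x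
    have h2' : TensorProduct.lid ℤ (C 0)
        (TensorProduct.map (stmt1.alphaMap (bC 0) i₀) LinearMap.id (Δ' 0 0 0 0 x)) = x :=
      LinearMap.congr_fun (hΔ'.2.2.2.2.2.2.2.1 0) x
    simp only [LinearMap.sub_apply]
    rw [map_sub, aux.map_etaA_etaA, aux.map_etaA_etaA, h2, h2', sub_self]
  set CH := aux.chainH bC d (stmt1.alphaMap (bC 0) i₀) e sc
    (fun k p q => Δ 0 k p q - Δ' 0 k p q) hdd hI0 hI h0 hD00 hDvan hDeq hDchain with hCH
  refine ⟨fun k => (CH k).1, ?_, ?_, ?_, ?_⟩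
  · intro k p q h
    exact (CH k).2.2.1.1 p q h
  · intro k p q g x
    exact (CH k).2.2.1.2 p q g x
  · intro k p q h
    exact (CH k).2.2.2.2.2 p q h
  · exact (aux.H0pack bC d (stmt1.alphaMap (bC 0) i₀) e sc
      (fun k p q => Δ 0 k p q - Δ' 0 k p q) hI0 hD00 hDvan hDeq).2.2.2
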